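/- For all natural numbers k and l: Σ_{j=0}^{l} (-1)^j q^{j(j+1)/2 - l(k+j+1)} / ((q;q)_j · (q;q)_{l-j} · (1-q^{k+j+1})) = 1 / (q^{k+1}; q)_{l+1}. -/

import Mathlib

open Finset

/-- The q-Pochhammer symbol `(a;q)_n = ∏_{j=0}^{n-1} (1 - a q^j)`. -/
def qPoch {F : Type*} [Field F] (q a : F) (n : ℕ) : F :=
  ∏ j ∈ Finset.range n, (1 - a * q ^ j)

/-- The q-binomial coefficient `[n choose i]_q`, equal to 0 when `i > n`. -/
def qBinom {F : Type*} [Field F] (q : F) (n i : ℕ) : F :=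
  if i ≤ n then qPoch q q n / (qPoch q q i * qPoch q q (n - i)) else 0

/-- The q-integer `[n]_q = (1-q^n)/(1-q)`. -/
def qInt {F : Type*} [Field F] (q : F) (n : ℕ) : F := (1 - q ^ n) / (1 - q)

/-- The q-dual sequence `a*_n = ∑_{i=0}^n (-1)^i [n choose i]_q q^{i(i-1)/2} a_i`. -/
def qDual {F : Type*} [Field F] (q : F) (a : ℕ → F) (n : ℕ) : F :=
  ∑ i ∈ Finset.range (n + 1), (-1 : F) ^ i * qBinom q n i * q ^ (i.choose 2) * a i

section
variable {F : Type*} [Field F] (q : F)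

lemma qPoch_succ (a : F) (n : ℕ) : qPoch q a (n+1) = qPoch q a n * (1 - a * q ^ n) :=
  Finset.prod_range_succ _ _

lemma pow_sub_one_ne (hq : ∀ m : ℕ, 0 < m → q ^ m ≠ 1) (m : ℕ) : 1 - q ^ (m+1) ≠ 0 := by
  intro h
  exact hq (m+1) (Nat.succ_pos m) ((sub_eq_zero.mp h).symm)

lemma qPoch_qq_ne_zero (hq : ∀ m : ℕ, 0 < m → q ^ m ≠ 1) (n : ℕ) : qPoch q q n ≠ 0 := by
  unfold qPoch
  rw [Finset.prod_ne_zero_iff]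
  intro j _
  have := pow_sub_one_ne q hq j
  rwa [pow_succ'] at this

lemma zpow_nat_sub (hq0 : q ≠ 0) {a b : ℕ} {c : ℤ} (h : c = (a:ℤ) - b) :
    q ^ c = q ^ a / q ^ b := by
  rw [h, zpow_sub₀ hq0, zpow_natCast, zpow_natCast]

def Tm (q : F) (l k j : ℕ) : F :=
  (-1 : F) ^ j * q ^ (((j + 1).choose 2 : ℤ) - (l : ℤ) * ((k : ℤ) + j + 1)) /
        (qPoch q q j * qPoch q q (l - j) * (1 - q ^ (k + j + 1)))

def Gm (q : F) (l k j : ℕ) : F :=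
  (-1 : F) ^ j * q ^ (((j + 1).choose 2 : ℤ) - ((l : ℤ)+1) * ((k : ℤ) + j + 1)) * (1 - q^(l+1-j)) /
        (qPoch q q j * qPoch q q (l + 1 - j) * (1 - q ^ (k + j + 1)))

def Hm (q : F) (l k j : ℕ) : F :=
  (-1 : F) ^ j * q ^ (((j + 1).choose 2 : ℤ) - ((l : ℤ)+1) * ((k : ℤ) + j + 1)) * (q^(l+1-j) * (1 - q^j)) /
        (qPoch q q j * qPoch q q (l + 1 - j) * (1 - q ^ (k + j + 1)))

lemma choose_step (j : ℕ) : (j+2).choose 2 = (j+1).choose 2 + (j+1) := by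
  rw [Nat.choose_succ_succ (j+1) 1, Nat.choose_one_right]
  norm_num
  omega

lemma frac1 (hq0 : q ≠ 0) (c y D : F) {e : ℤ} {a b : ℕ} (h : e = (a:ℤ) - b) :
    c * q ^ e * y / D = c * q ^ a * y / (q ^ b * D) := by
  rw [zpow_nat_sub q hq0 h]; ring

lemma frac2 (hq0 : q ≠ 0) (c D : F) {e : ℤ} {a b : ℕ} (h : e = (a:ℤ) - b) :
    c * q ^ e / D = c * q ^ a / (q ^ b * D) := by
  rw [zpow_nat_sub q hq0 h]; ring

lemma main_term (hq0 : q ≠ 0) (hq : ∀ m : ℕ, 0 < m → q ^ m ≠ 1) (l k j : ℕ) (hj : j ≤ l) :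
    Gm q l k j + Hm q l k (j+1) = Tm q l k j - q^(l+1) * Tm q l (k+1) j := by
  obtain ⟨d, rfl⟩ : ∃ d, l = j + d := ⟨l - j, by omega⟩
  unfold Tm Gm Hm
  rw [show j+d+1-(j+1) = d from by omega, show j+d+1-j = d+1 from by omega,
      show j+d-j = d from by omega]
  rw [qPoch_succ q q d, qPoch_succ q q j]
  rw [frac1 q hq0 _ _ _ (show ((j + 1).choose 2 : ℤ) - (((j+d : ℕ) : ℤ)+1) * ((k : ℤ) + j + 1)
        = (((j+1).choose 2 + (j+d+1) : ℕ) : ℤ) - (((j+d+1) * (k+j+2) : ℕ) : ℤ) from by push_cast; ring)]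
  rw [frac1 q hq0 _ _ _ (show ((j + 1 + 1).choose 2 : ℤ) - (((j+d : ℕ) : ℤ)+1) * ((k : ℤ) + ((j+1 : ℕ) : ℤ) + 1)
        = (((j+1+1).choose 2 : ℕ) : ℤ) - (((j+d+1) * (k+j+2) : ℕ) : ℤ) from by push_cast; ring)]
  rw [frac2 q hq0 _ _ (show ((j + 1).choose 2 : ℤ) - ((j+d : ℕ) : ℤ) * ((k : ℤ) + j + 1)
        = (((j+1).choose 2 + ((j+d) + (k+j+2)) : ℕ) : ℤ) - (((j+d+1) * (k+j+2) : ℕ) : ℤ) from by push_cast; ring)]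
  rw [frac2 q hq0 _ _ (show ((j + 1).choose 2 : ℤ) - ((j+d : ℕ) : ℤ) * (((k+1 : ℕ) : ℤ) + (j:ℤ) + 1)
        = (((j+1).choose 2 + (k+j+2) : ℕ) : ℤ) - (((j+d+1) * (k+j+2) : ℕ) : ℤ) from by push_cast; ring)]
  rw [mul_div_assoc']
  have hPj := qPoch_qq_ne_zero q hq j
  have hPd := qPoch_qq_ne_zero q hq d
  have h1 : (1 - q ^ (k+j+1)) ≠ 0 := pow_sub_one_ne q hq (k+j)
  have h2 : (1 - q ^ (k+(j+1)+1)) ≠ 0 := by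
    have := pow_sub_one_ne q hq (k+j+1)
    rwa [show k+j+1+1 = k+(j+1)+1 from by omega] at this
  have h3 : (1 - q ^ (k+1+j+1)) ≠ 0 := by
    have := pow_sub_one_ne q hq (k+j+1)
    rwa [show k+j+1+1 = k+1+j+1 from by omega] at this
  have h4 : (1 - q * q ^ j) ≠ 0 := by
    have := pow_sub_one_ne q hq j; rwa [pow_succ'] at this
  have h5 : (1 - q * q ^ d) ≠ 0 := by
    have := pow_sub_one_ne q hq d; rwa [pow_succ'] at this
  have hB : q ^ ((j+d+1) * (k+j+2)) ≠ 0 := pow_ne_zero _ hq0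
  have hD1 : q ^ ((j+d+1) * (k+j+2)) * (qPoch q q j * (qPoch q q d * (1 - q * q ^ d)) * (1 - q ^ (k+j+1))) ≠ 0 := by
    exact mul_ne_zero hB (mul_ne_zero (mul_ne_zero hPj (mul_ne_zero hPd h5)) h1)
  have hD2 : q ^ ((j+d+1) * (k+j+2)) * (qPoch q q j * (1 - q * q ^ j) * qPoch q q d * (1 - q ^ (k+(j+1)+1))) ≠ 0 := by
    exact mul_ne_zero hB (mul_ne_zero (mul_ne_zero (mul_ne_zero hPj h4) hPd) h2)
  have hD3 : q ^ ((j+d+1) * (k+j+2)) * (qPoch q q j * qPoch q q d * (1 - q ^ (k+j+1))) ≠ 0 := by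
    exact mul_ne_zero hB (mul_ne_zero (mul_ne_zero hPj hPd) h1)
  have hD4 : q ^ ((j+d+1) * (k+j+2)) * (qPoch q q j * qPoch q q d * (1 - q ^ (k+1+j+1))) ≠ 0 := by
    exact mul_ne_zero hB (mul_ne_zero (mul_ne_zero hPj hPd) h3)
  rw [div_add_div _ _ hD1 hD2, div_sub_div _ _ hD3 hD4, div_eq_div_iff (mul_ne_zero hD1 hD2) (mul_ne_zero hD3 hD4)]
  rw [choose_step]
  ring

lemma split_lemma (l k j : ℕ) (hj : j ≤ l + 1) :
    (1 - q ^ (l+1)) * Tm q (l+1) k j = Gm q l k j + Hm q l k j := by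
  unfold Tm Gm Hm
  have h1 : ((l + 1 : ℕ) : ℤ) = (l : ℤ) + 1 := by push_cast; ring
  rw [h1, ← add_div, mul_div_assoc']
  congr 1
  have h2 : q ^ (l+1-j) * q ^ j = q ^ (l+1) := by
    rw [← pow_add]; congr 1; omega
  rw [← h2]
  ring

lemma Hm_zero (l k : ℕ) : Hm q l k 0 = 0 := by simp [Hm]

lemma Gm_top (l k : ℕ) : Gm q l k (l+1) = 0 := by simp [Gm]

lemma qPoch_qpow_ne_zero (hq : ∀ m : ℕ, 0 < m → q ^ m ≠ 1) (k n : ℕ) :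
    qPoch q (q^(k+1)) n ≠ 0 := by
  unfold qPoch
  rw [Finset.prod_ne_zero_iff]
  intro i _
  have := pow_sub_one_ne q hq (k+i)
  rwa [show k+i+1 = (k+1)+i from by omega, pow_add] at this

lemma qPoch_shift (k n : ℕ) : qPoch q (q^(k+1)) (n+1) = (1 - q^(k+1)) * qPoch q (q^(k+1+1)) n := by
  unfold qPoch
  rw [Finset.prod_range_succ']
  rw [mul_comm]
  congr 1
  · ring
  · apply Finset.prod_congr rfl
    intro i _
    ring

end


theorem stmt13 {F : Type*} [Field F] (q : F) (hq0 : q ≠ 0)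
    (hq : ∀ m : ℕ, 0 < m → q ^ m ≠ 1) (k l : ℕ) :
    ∑ j ∈ Finset.range (l + 1), (-1 : F) ^ j *
        q ^ (((j + 1).choose 2 : ℤ) - (l : ℤ) * ((k : ℤ) + j + 1)) /
        (qPoch q q j * qPoch q q (l - j) * (1 - q ^ (k + j + 1))) =
    1 / qPoch q (q ^ (k + 1)) (l + 1) := by

  induction l generalizing k with
  | zero =>
      simp [qPoch, Tm]
  | succ l ih =>
      have ihk : ∑ j ∈ Finset.range (l+1), Tm q l k j = 1 / qPoch q (q^(k+1)) (l+1) := ih k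
      have ihk1 : ∑ j ∈ Finset.range (l+1), Tm q l (k+1) j = 1 / qPoch q (q^(k+1+1)) (l+1) := ih (k+1)
      show ∑ j ∈ Finset.range (l+1+1), Tm q (l+1) k j = 1 / qPoch q (q^(k+1)) (l+1+1)
      have hl1 : (1 - q^(l+1)) ≠ 0 := pow_sub_one_ne q hq l
      have key : (1 - q^(l+1)) * ∑ j ∈ Finset.range (l+1+1), Tm q (l+1) k j
          = (∑ j ∈ Finset.range (l+1), Tm q l k j) - q^(l+1) * ∑ j ∈ Finset.range (l+1), Tm q l (k+1) j := by
        rw [Finset.mul_sum]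
        calc ∑ j ∈ Finset.range (l+1+1), (1 - q^(l+1)) * Tm q (l+1) k j
            = ∑ j ∈ Finset.range (l+1+1), (Gm q l k j + Hm q l k j) := by
              apply Finset.sum_congr rfl
              intro j hj
              exact split_lemma q l k j (Nat.lt_succ_iff.mp (Finset.mem_range.mp hj))
          _ = (∑ j ∈ Finset.range (l+1+1), Gm q l k j) + ∑ j ∈ Finset.range (l+1+1), Hm q l k j :=
              Finset.sum_add_distrib
          _ = (∑ j ∈ Finset.range (l+1), Gm q l k j) + ∑ j ∈ Finset.range (l+1), Hm q l k (j+1) := by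
              rw [Finset.sum_range_succ, Gm_top, add_zero,
                  Finset.sum_range_succ' (fun j => Hm q l k j) (l+1), Hm_zero, add_zero]
          _ = ∑ j ∈ Finset.range (l+1), (Tm q l k j - q^(l+1) * Tm q l (k+1) j) := by
              rw [← Finset.sum_add_distrib]
              apply Finset.sum_congr rfl
              intro j hj
              exact main_term q hq0 hq l k j (Nat.lt_succ_iff.mp (Finset.mem_range.mp hj))
          _ = _ := by rw [Finset.sum_sub_distrib, ← Finset.mul_sum]
      have hA : qPoch q (q^(k+1)) (l+1) ≠ 0 := qPoch_qpow_ne_zero q hq k (l+1)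
      have hB : qPoch q (q^(k+1+1)) (l+1) ≠ 0 := qPoch_qpow_ne_zero q hq (k+1) (l+1)
      have hC : qPoch q (q^(k+1)) (l+1+1) ≠ 0 := qPoch_qpow_ne_zero q hq k (l+1+1)
      have hC1 : qPoch q (q^(k+1)) (l+1+1) = qPoch q (q^(k+1)) (l+1) * (1 - q^(k+1) * q^(l+1)) :=
        qPoch_succ q (q^(k+1)) (l+1)
      have hC2 : qPoch q (q^(k+1)) (l+1+1) = (1 - q^(k+1)) * qPoch q (q^(k+1+1)) (l+1) :=
        qPoch_shift q k (l+1)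
      have hAB : qPoch q (q^(k+1)) (l+1) * (1 - q^(k+1) * q^(l+1))
          = (1 - q^(k+1)) * qPoch q (q^(k+1+1)) (l+1) := hC1.symm.trans hC2
      have claim : (1 - q^(l+1)) * (1 / qPoch q (q^(k+1)) (l+1+1))
          = 1 / qPoch q (q^(k+1)) (l+1) - q^(l+1) * (1 / qPoch q (q^(k+1+1)) (l+1)) := by
        rw [mul_one_div, mul_one_div, div_sub_div _ _ hA hB, hC2,
            div_eq_div_iff (mul_ne_zero (sub_ne_zero.mpr (fun h => hq (k+1) (Nat.succ_pos k) h.symm)) hB) (mul_ne_zero hA hB)]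
        linear_combination (qPoch q (q^(k+1+1)) (l+1)) * hAB
      have := key.trans (by rw [ihk, ihk1, ← claim])
      exact mul_left_cancel₀ hl1 this
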